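/- arXiv:2203.17132 — 3 statements merged into one kernel-verified Lean document; each statement's English description precedes it below -/
import Mathlib

section
/- The family ℐ = {X ⊆ V : |X ∩ χ⁻¹(i)| ≤ β_i for all i, and |X| + g_X ≤ k} satisfies the matroid exchange property: if A, B ∈ ℐ and |A| < |B|, then there exists e ∈ B \ A such that A ∪ {e} ∈ ℐ. -/
open Finset

variable {V : Type*} [DecidableEq V] [Fintype V]

/-- Number of vertices of color `i` in `X`. -/
def colorCount {c : ℕ} (χ : V → Fin c) (X : Finset V) (i : Fin c) : ℕ :=
  (X.filter (fun v => χ v = i)).card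

/-- The family ℐ of independent sets: color upper bounds hold and there is
still room to satisfy all lower bounds within `k` elements
(`α i - colorCount χ X i` is truncated subtraction, i.e. `max 0 (α i - |X ∩ χ⁻¹ i|)`). -/
def FairIndep {c : ℕ} (χ : V → Fin c) (α β : Fin c → ℕ) (k : ℕ) (X : Finset V) : Prop :=
  (∀ i, colorCount χ X i ≤ β i) ∧
    X.card + ∑ i, (α i - colorCount χ X i) ≤ k

lemma colorCount_insert_self {c : ℕ} (χ : V → Fin c) (A : Finset V) (e : V) (he : e ∉ A) :
    colorCount χ (insert e A) (χ e) = colorCount χ A (χ e) + 1 := by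
  unfold colorCount
  rw [Finset.filter_insert, if_pos rfl,
    Finset.card_insert_of_notMem (fun h => he (Finset.mem_filter.1 h).1)]

lemma colorCount_insert_ne {c : ℕ} (χ : V → Fin c) (A : Finset V) (e : V) (i : Fin c)
    (hi : χ e ≠ i) : colorCount χ (insert e A) i = colorCount χ A i := by
  unfold colorCount
  rw [Finset.filter_insert, if_neg hi]

lemma sum_colorCount {c : ℕ} (χ : V → Fin c) (X : Finset V) :
    ∑ i, colorCount χ X i = X.card := by
  unfold colorCount
  exact (Finset.card_eq_sum_card_fiberwise (fun v _ => Finset.mem_univ (χ v))).symm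

theorem fairIndep_exchange {c : ℕ} (χ : V → Fin c) (α β : Fin c → ℕ) (k : ℕ)
    (hαβ : ∀ i, α i ≤ β i) (hk : ∑ i, α i ≤ k) (A B : Finset V)
    (hA : FairIndep χ α β k A) (hB : FairIndep χ α β k B)
    (hcard : A.card < B.card) :
    ∃ e ∈ B \ A, FairIndep χ α β k (insert e A) := by
  obtain ⟨hAβ, hAk⟩ := hA
  obtain ⟨hBβ, hBk⟩ := hB
  -- pick an element of B \ A of a given color j where B has more than A
  have pick : ∀ j : Fin c, colorCount χ A j < colorCount χ B j →
      ∃ e, e ∈ B ∧ e ∉ A ∧ χ e = j := by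
    intro j hj
    obtain ⟨e, heB, heA⟩ := Finset.not_subset.1
      (fun h => absurd (Finset.card_le_card h) (Nat.not_le.2 hj))
    refine ⟨e, (Finset.mem_filter.1 heB).1, fun hmem => heA ?_, (Finset.mem_filter.1 heB).2⟩
    exact Finset.mem_filter.2 ⟨hmem, (Finset.mem_filter.1 heB).2⟩
  -- key: the new deficiency sum
  have key : ∀ e : V, e ∉ A →
      ∑ i, (α i - colorCount χ (insert e A) i) + (α (χ e) - colorCount χ A (χ e))
        = ∑ i, (α i - colorCount χ A i) + (α (χ e) - (colorCount χ A (χ e) + 1)) := by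
    intro e he
    have hs : ∀ X : Finset V, ∑ i, (α i - colorCount χ X i)
        = (α (χ e) - colorCount χ X (χ e)) +
          ∑ i ∈ Finset.univ.erase (χ e), (α i - colorCount χ X i) :=
      fun X => (Finset.add_sum_erase _ _ (Finset.mem_univ _)).symm
    have heq : ∑ i ∈ Finset.univ.erase (χ e), (α i - colorCount χ (insert e A) i)
        = ∑ i ∈ Finset.univ.erase (χ e), (α i - colorCount χ A i) :=
      Finset.sum_congr rfl fun i hi => by
        rw [colorCount_insert_ne χ A e i (Ne.symm (Finset.mem_erase.1 hi).1)]
    rw [hs (insert e A), hs A, heq, colorCount_insert_self χ A e he]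
    omega
  have hex : ∃ j, colorCount χ A j < colorCount χ B j := by
    by_contra h
    push_neg at h
    have := Finset.sum_le_sum (fun i (_ : i ∈ Finset.univ) => h i)
    rw [sum_colorCount, sum_colorCount] at this
    omega
  by_cases hcase : ∃ j, colorCount χ A j < colorCount χ B j ∧ colorCount χ A j < α j
  · obtain ⟨j, hj1, hj2⟩ := hcase
    obtain ⟨e, heB, heA, hχ⟩ := pick j hj1
    refine ⟨e, Finset.mem_sdiff.2 ⟨heB, heA⟩, ?_, ?_⟩
    · intro i
      by_cases hij : χ e = i
      · subst hij
        rw [colorCount_insert_self χ A e heA]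
        have := hαβ (χ e)
        subst hχ; omega
      · rw [colorCount_insert_ne χ A e i hij]; exact hAβ i
    · have hkey := key e heA
      rw [Finset.card_insert_of_notMem heA]
      subst hχ
      omega
  · push_neg at hcase
    obtain ⟨j, hj⟩ := hex
    obtain ⟨e, heB, heA, hχ⟩ := pick j hj
    -- deficiency of A ≤ deficiency of B, so A's budget has slack
    have hdef : ∑ i, (α i - colorCount χ A i) ≤ ∑ i, (α i - colorCount χ B i) := by
      refine Finset.sum_le_sum fun i _ => ?_
      have := hcase i
      omega
    have hslack : A.card + ∑ i, (α i - colorCount χ A i) + 1 ≤ k := by omega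
    refine ⟨e, Finset.mem_sdiff.2 ⟨heB, heA⟩, ?_, ?_⟩
    · intro i
      by_cases hij : χ e = i
      · subst hij
        rw [colorCount_insert_self χ A e heA]
        have := hBβ (χ e)
        subst hχ; omega
      · rw [colorCount_insert_ne χ A e i hij]; exact hAβ i
    · have hkey := key e heA
      rw [Finset.card_insert_of_notMem heA]
      omega
end

section
/- The pair (V, ℐ) with ℐ = {X ⊆ V : |X ∩ χ⁻¹(i)| ≤ β_i for all i, and |X| + g_X ≤ k} is a matroid, i.e., ∅ ∈ ℐ, ℐ is hereditary, and ℐ satisfies the exchange property. -/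
open Finset

variable {V : Type*} [DecidableEq V] [Fintype V]

lemma colorCount_mono {c : ℕ} (χ : V → Fin c) {X X' : Finset V} (h : X' ⊆ X) (i : Fin c) :
    colorCount χ X' i ≤ colorCount χ X i :=
  Finset.card_le_card (Finset.filter_subset_filter _ h)

lemma colorCount_insert {c : ℕ} (χ : V → Fin c) {A : Finset V} {e : V} (he : e ∉ A) (i : Fin c) :
    colorCount χ (insert e A) i =
      if χ e = i then colorCount χ A i + 1 else colorCount χ A i := by
  simp only [colorCount, Finset.filter_insert]
  split
  · rw [Finset.card_insert_of_notMem (fun hmem => he (Finset.mem_filter.mp hmem).1)]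
  · rfl

lemma exists_new_elem {c : ℕ} (χ : V → Fin c) {A B : Finset V} {i : Fin c}
    (h : colorCount χ A i < colorCount χ B i) :
    ∃ e, e ∈ B ∧ e ∉ A ∧ χ e = i := by
  obtain ⟨e, heB, heA⟩ := Finset.not_subset.mp
    (fun hsub => absurd (Finset.card_le_card hsub) (not_le.mpr h))
  rw [Finset.mem_filter] at heB
  exact ⟨e, heB.1, fun hA => heA (Finset.mem_filter.mpr ⟨hA, heB.2⟩), heB.2⟩

theorem fairIndep_matroid {c : ℕ} (χ : V → Fin c) (α β : Fin c → ℕ) (k : ℕ)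
    (hαβ : ∀ i, α i ≤ β i) (hk : ∑ i, α i ≤ k) :
    FairIndep χ α β k (∅ : Finset V) ∧
    (∀ X X' : Finset V, X' ⊆ X → FairIndep χ α β k X → FairIndep χ α β k X') ∧
    (∀ A B : Finset V, FairIndep χ α β k A → FairIndep χ α β k B →
      A.card < B.card → ∃ e ∈ B \ A, FairIndep χ α β k (insert e A)) := by
  refine ⟨⟨fun i => by simp [colorCount], by simpa [colorCount] using hk⟩, ?_, ?_⟩
  · rintro X X' hsub ⟨h1, h2⟩
    refine ⟨fun i => le_trans (colorCount_mono χ hsub i) (h1 i), le_trans ?_ h2⟩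
    rw [← sum_colorCount χ X, ← sum_colorCount χ X', ← Finset.sum_add_distrib,
      ← Finset.sum_add_distrib]
    exact Finset.sum_le_sum fun i _ => by
      have := colorCount_mono χ hsub i; omega
  · rintro A B ⟨hAβ, hAk⟩ ⟨hBβ, hBk⟩ hcard
    have hsum : ∑ i, colorCount χ A i < ∑ i, colorCount χ B i := by
      rw [sum_colorCount, sum_colorCount]; exact hcard
    by_cases hcase : ∃ i, colorCount χ A i < colorCount χ B i ∧ colorCount χ A i < α i
    · obtain ⟨i, hiB, hiα⟩ := hcase
      obtain ⟨e, heB, heA, hei⟩ := exists_new_elem χ hiB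
      refine ⟨e, Finset.mem_sdiff.mpr ⟨heB, heA⟩, fun j => ?_, ?_⟩
      · rw [colorCount_insert χ heA]
        split
        · next h =>
            have hj : j = i := h.symm.trans hei
            subst hj; exact lt_of_lt_of_le hiB (hBβ _)
        · exact hAβ j
      · rw [Finset.card_insert_of_notMem heA]
        have hlt : ∑ j, (α j - colorCount χ (insert e A) j) <
            ∑ j, (α j - colorCount χ A j) := by
          refine Finset.sum_lt_sum (fun j _ => ?_) ⟨i, Finset.mem_univ i, ?_⟩
          · rw [colorCount_insert χ heA]; split <;> omega
          · rw [colorCount_insert χ heA, if_pos hei]; omega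

        omega
    · push_neg at hcase
      obtain ⟨i, _, hiB⟩ := Finset.exists_lt_of_sum_lt hsum
      obtain ⟨e, heB, heA, hei⟩ := exists_new_elem χ hiB
      have hαi : α i ≤ colorCount χ A i := hcase i hiB
      refine ⟨e, Finset.mem_sdiff.mpr ⟨heB, heA⟩, fun j => ?_, ?_⟩
      · rw [colorCount_insert χ heA]
        split
        · next h =>
            have hj : j = i := h.symm.trans hei
            subst hj; exact lt_of_lt_of_le hiB (hBβ _)
        · exact hAβ j
      · rw [Finset.card_insert_of_notMem heA]
        have heq : ∑ j, (α j - colorCount χ (insert e A) j) =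
            ∑ j, (α j - colorCount χ A j) := by
          refine Finset.sum_congr rfl fun j _ => ?_
          rw [colorCount_insert χ heA]
          split
          · next h =>
              have hj : j = i := h.symm.trans hei
              subst hj; omega
          · rfl
        have hAB : A.card + ∑ j, (α j - colorCount χ A j) + B.card ≤
            (B.card + ∑ j, (α j - colorCount χ B j)) + A.card := by
          rw [← sum_colorCount χ A, ← sum_colorCount χ B]
          rw [← Finset.sum_add_distrib, ← Finset.sum_add_distrib,
            ← Finset.sum_add_distrib, ← Finset.sum_add_distrib]
          refine Finset.sum_le_sum fun j _ => ?_
          rcases le_or_gt (colorCount χ B j) (colorCount χ A j) with h | h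
          · omega
          · have := hcase j h; omega
        omega
end

section
/- All bases of the matroid M = (V, ℐ) with ℐ = {X ⊆ V : |X ∩ χ⁻¹(i)| ≤ β_i for all i, |X| + g_X ≤ k} are balance-fair in the following sense: if α_i = β_i = r for all i and k = c·r, then every basis B satisfies |B ∩ χ⁻¹(i)| = r for every color i. -/
open Finset

variable {V : Type*} [DecidableEq V] [Fintype V]

theorem fairIndep_basis_balanced {c : ℕ} (χ : V → Fin c) (r : ℕ)
    (hfull : ∀ i, r ≤ colorCount χ (Finset.univ : Finset V) i)
    (B : Finset V)
    (hB : FairIndep χ (fun _ => r) (fun _ => r) (c * r) B)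
    (hmax : ∀ B' : Finset V, FairIndep χ (fun _ => r) (fun _ => r) (c * r) B' →
      B ⊆ B' → B' = B) :
    ∀ i, colorCount χ B i = r := by
  intro i
  by_contra hne
  have hlt : colorCount χ B i < r := lt_of_le_of_ne (hB.1 i) hne
  obtain ⟨v, hv, hvB'⟩ : ∃ v ∈ univ.filter (fun v => χ v = i),
      v ∉ B.filter (fun v => χ v = i) := by
    apply Finset.exists_of_ssubset
    exact Finset.ssubset_of_subset_of_ssubset
      (Finset.Subset.refl _)
      ((Finset.filter_subset_filter _ (Finset.subset_univ B)).ssubset_of_ne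
        (fun h => absurd (congrArg Finset.card h) (Nat.ne_of_lt (lt_of_lt_of_le hlt (hfull i)))))
  have hvi : χ v = i := (Finset.mem_filter.mp hv).2
  have hvB : v ∉ B := fun h => hvB' (Finset.mem_filter.mpr ⟨h, hvi⟩)
  have hcount : ∀ j, colorCount χ (insert v B) j =
      if j = i then colorCount χ B j + 1 else colorCount χ B j := by
    intro j
    by_cases hji : j = i
    · subst hji
      rw [if_pos rfl]
      unfold colorCount
      rw [Finset.filter_insert, if_pos hvi, Finset.card_insert_of_notMem hvB']
    · rw [if_neg hji]
      unfold colorCount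
      rw [Finset.filter_insert, if_neg (by rw [hvi]; exact fun h => hji h.symm)]
  have hsum : ∑ j, (r - colorCount χ (insert v B) j) + 1 = ∑ j, (r - colorCount χ B j) := by
    have hterm : ∀ j, (r - colorCount χ (insert v B) j) + (if j = i then 1 else 0)
        = r - colorCount χ B j := by
      intro j
      rw [hcount j]
      by_cases h : j = i
      · subst h; rw [if_pos rfl, if_pos rfl]; omega
      · rw [if_neg h, if_neg h, Nat.add_zero]
    calc ∑ j, (r - colorCount χ (insert v B) j) + 1
        = ∑ j, ((r - colorCount χ (insert v B) j) + if j = i then 1 else 0) := by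
          rw [Finset.sum_add_distrib, Finset.sum_ite_eq' univ i (fun _ => 1),
            if_pos (Finset.mem_univ i)]
      _ = ∑ j, (r - colorCount χ B j) := Finset.sum_congr rfl fun j _ => hterm j
  have hindep : FairIndep χ (fun _ => r) (fun _ => r) (c * r) (insert v B) := by
    constructor
    · intro j
      show colorCount χ (insert v B) j ≤ r
      rw [hcount j]
      by_cases h : j = i
      · rw [if_pos h, h]; omega
      · rw [if_neg h]; exact hB.1 j
    · have hcard : (insert v B).card = B.card + 1 := Finset.card_insert_of_notMem hvB
      have h2 : B.card + ∑ j, (r - colorCount χ B j) ≤ c * r := hB.2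
      show (insert v B).card + ∑ j, (r - colorCount χ (insert v B) j) ≤ c * r
      omega
  have heq := hmax (insert v B) hindep (Finset.subset_insert v B)
  exact hvB (heq ▸ Finset.mem_insert_self v B)
end
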